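/- Let d ≥ 1, let a_0, a_1, …, a_d ∈ ℂ, let P(z) = Σ_{i=0}^d a_i z^i, and let the d-th polar form of P be the multilinear symmetric polynomial P̂(z_1,…,z_d) = Σ_{I ⊆ {1,…,d}} (a_{|I|} / C(d,|I|)) · Π_{i∈I} z_i, where C(d,k) is the binomial coefficient. Then for every ε > 0, the following are equivalent: (i) P(z) ≠ 0 for every z ∈ ℂ with Re z ≥ −ε; (ii) P̂(z_1,…,z_d) ≠ 0 whenever z_1,…,z_d ∈ ℂ all satisfy Re z_i ≥ −ε. -/

import Mathlib

open Finset Polynomial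

namespace GWSAux

/-! ### A convexity argument for the half-plane

`g x w ε` is a real quadratic form on `ℂ` (with nonnegative leading coefficient, hence convex)
whose negative sublevel set contains all values `(w - r)/(x - r)` for `r` in the open
half-plane `re < -ε` whenever `x ≠ w`, and which is nonnegative on the nonpositive reals. -/

def g (x w : ℂ) (ε : ℝ) (v : ℂ) : ℝ :=
  (x.re + ε) * (v.re ^ 2 + v.im ^ 2) - (w.re * v.re + w.im * v.im)
    - (v.re * x.re - v.im * x.im) - 2 * ε * v.re + (w.re + ε)

lemma g_val {x w r : ℂ} {ε : ℝ} (hxr : x - r ≠ 0) :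
    g x w ε ((w - r) / (x - r)) =
      (r.re + ε) * ((1 - (w - r) / (x - r)).re ^ 2 + (1 - (w - r) / (x - r)).im ^ 2) := by
  set v := (w - r) / (x - r) with hv
  have hw : w = v * (x - r) + r := by
    rw [hv, div_mul_cancel₀ _ hxr]; ring
  have hwre : w.re = v.re * (x.re - r.re) - v.im * (x.im - r.im) + r.re := by
    rw [hw]; simp [Complex.add_re, Complex.mul_re, Complex.sub_re, Complex.sub_im]
  have hwim : w.im = v.re * (x.im - r.im) + v.im * (x.re - r.re) + r.im := by
    rw [hw]; simp [Complex.add_im, Complex.mul_im, Complex.sub_re, Complex.sub_im]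
  simp only [g, hwre, hwim, Complex.sub_re, Complex.sub_im, Complex.one_re, Complex.one_im]
  ring

lemma g_convex {x w : ℂ} {ε : ℝ} (hx : -ε ≤ x.re) {t s : ℝ} (ht : 0 ≤ t) (hs : 0 ≤ s)
    (hts : t + s = 1) (v₁ v₂ : ℂ) :
    g x w ε ((t : ℂ) * v₁ + (s : ℂ) * v₂) ≤ t * g x w ε v₁ + s * g x w ε v₂ := by
  have hxe : 0 ≤ x.re + ε := by linarith
  have hs' : s = 1 - t := by linarith
  subst hs'
  have key : t * g x w ε v₁ + (1 - t) * g x w ε v₂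
      - g x w ε ((t : ℂ) * v₁ + ((1 - t : ℝ) : ℂ) * v₂)
      = (x.re + ε) * (t * (1 - t)) * ((v₁.re - v₂.re) ^ 2 + (v₁.im - v₂.im) ^ 2) := by
    simp only [g, Complex.add_re, Complex.add_im, Complex.mul_re, Complex.mul_im,
      Complex.ofReal_re, Complex.ofReal_im]
    ring
  nlinarith [mul_nonneg (mul_nonneg hxe (mul_nonneg ht hs)) (by positivity :
    (0:ℝ) ≤ (v₁.re - v₂.re) ^ 2 + (v₁.im - v₂.im) ^ 2)]

lemma g_mean {x w : ℂ} {ε : ℝ} (hx : -ε ≤ x.re) :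
    ∀ s : Multiset ℂ, s ≠ 0 → (∀ v ∈ s, g x w ε v < 0) →
      g x w ε (s.sum / (Multiset.card s : ℂ)) < 0 := by
  intro s
  induction s using Multiset.induction with
  | empty => intro h; exact absurd rfl h
  | cons v t ih =>
    intro _ hmem
    by_cases ht : t = 0
    · subst ht; simpa using hmem v (Multiset.mem_cons_self _ _)
    · have hkpos : 0 < Multiset.card t := Multiset.card_pos.2 ht
      set k := Multiset.card t with hk
      have hmt : g x w ε (t.sum / (k : ℂ)) < 0 :=
        ih ht fun u hu => hmem u (Multiset.mem_cons_of_mem hu)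
      have hv0 : g x w ε v < 0 := hmem v (Multiset.mem_cons_self _ _)
      have hkR : (0:ℝ) < (k : ℝ) := by exact_mod_cast hkpos
      have hkC : (k : ℂ) ≠ 0 := by exact_mod_cast hkpos.ne'
      have hcomb : (v ::ₘ t).sum / ((Multiset.card (v ::ₘ t)) : ℂ)
          = ((1 / ((k : ℝ) + 1) : ℝ) : ℂ) * v
            + (((k : ℝ) / ((k : ℝ) + 1) : ℝ) : ℂ) * (t.sum / (k : ℂ)) := by
        rw [Multiset.sum_cons, Multiset.card_cons]
        push_cast
        have h1 : ((k : ℂ) + 1) ≠ 0 := by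
          have : ((k : ℂ) + 1) = ((k + 1 : ℕ) : ℂ) := by push_cast; ring
          rw [this]; exact_mod_cast (Nat.succ_ne_zero k)
        field_simp
        ring
      rw [hcomb]
      have hle := g_convex (w := w) hx (t := 1 / ((k : ℝ) + 1)) (s := (k : ℝ) / ((k : ℝ) + 1))
        (by positivity) (by positivity) (by field_simp; ring) v (t.sum / (k : ℂ))
      have h1 : (0:ℝ) < 1 / ((k : ℝ) + 1) := by positivity
      have h2 : (0:ℝ) < (k : ℝ) / ((k : ℝ) + 1) := by positivity
      nlinarith

lemma g_nonneg_neg_real {x w : ℂ} {ε : ℝ} (hx : -ε ≤ x.re) (hw : -ε ≤ w.re) {t : ℝ}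
    (ht : 0 ≤ t) : 0 ≤ g x w ε ((-t : ℝ) : ℂ) := by
  simp only [g, Complex.ofReal_re, Complex.ofReal_im]
  nlinarith

/-- The key nonvanishing statement behind Laguerre's theorem for the half-plane. -/
lemma key (m : ℕ) (hm : 1 ≤ m) {ε : ℝ} (hε : 0 < ε) {x w : ℂ} (hx : -ε ≤ x.re)
    (hw : -ε ≤ w.re) (s : Multiset ℂ) (hcard : Multiset.card s ≤ m)
    (hs : ∀ r ∈ s, r.re < -ε) :
    ((m : ℂ) - (Multiset.card s : ℂ)) + (s.map fun r => (w - r) / (x - r)).sum ≠ 0 := by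
  have hxr : ∀ r ∈ s, x - r ≠ 0 := by
    intro r hr h
    rw [sub_eq_zero] at h
    subst h
    exact absurd hx (not_le.2 (hs x hr))
  by_cases hxw : x = w
  · subst hxw
    have hmap : (s.map fun r => (x - r) / (x - r)) = s.map fun _ => (1 : ℂ) :=
      Multiset.map_congr rfl fun r hr => div_self (hxr r hr)
    rw [hmap]
    simp only [Multiset.map_const', Multiset.sum_replicate, smul_eq_mul, mul_one]
    intro h
    have hm0 : (m : ℂ) = 0 := by linear_combination h
    have : m = 0 := by exact_mod_cast hm0
    omega
  · intro h0
    set k := Multiset.card s with hk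
    have hkpos : 0 < k := by
      rcases Nat.eq_zero_or_pos k with h | h
      · exfalso
        have hs0 : s = 0 := Multiset.card_eq_zero.1 (hk.symm.trans h)
        rw [hs0] at h0
        rw [h] at h0
        simp only [Multiset.map_zero, Multiset.sum_zero, Nat.cast_zero, sub_zero,
          add_zero, Nat.cast_eq_zero] at h0
        omega
      · exact h
    set s' := s.map (fun r => (w - r) / (x - r)) with hs'
    have hcard' : Multiset.card s' = k := by rw [hs', Multiset.card_map]
    have hs'ne : s' ≠ 0 := by
      intro h
      rw [h] at hcard'
      simp only [Multiset.card_zero] at hcard'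
      omega
    have hall : ∀ v ∈ s', g x w ε v < 0 := by
      intro v hv
      rw [hs'] at hv
      obtain ⟨r, hr, rfl⟩ := Multiset.mem_map.1 hv
      rw [g_val (hxr r hr)]
      have h1 : r.re + ε < 0 := by linarith [hs r hr]
      have h2 : (1 : ℂ) - (w - r) / (x - r) ≠ 0 := by
        intro h
        apply hxw
        have hne := hxr r hr
        field_simp at h
        first
          | exact h
          | exact h.symm
          | (rw [mul_zero, sub_eq_zero] at h; linear_combination h)
      have h3 : 0 < (1 - (w - r) / (x - r)).re ^ 2 + (1 - (w - r) / (x - r)).im ^ 2 := by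
        have hpos := Complex.normSq_pos.2 h2
        rw [Complex.normSq_apply] at hpos
        nlinarith
      exact mul_neg_of_neg_of_pos h1 h3
    have hmean := g_mean hx s' hs'ne hall
    rw [hcard'] at hmean
    have hsum : s'.sum = (k : ℂ) - (m : ℂ) := by linear_combination h0
    rw [hsum] at hmean
    have hkC : (k : ℂ) ≠ 0 := by exact_mod_cast hkpos.ne'
    have hkR : (0 : ℝ) < (k : ℝ) := by exact_mod_cast hkpos
    set t : ℝ := ((m : ℝ) - (k : ℝ)) / (k : ℝ) with htdef
    have ht : 0 ≤ t := by
      apply div_nonneg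
      · have : (k : ℝ) ≤ (m : ℝ) := by exact_mod_cast hcard
        linarith
      · positivity
    have heq : ((k : ℂ) - (m : ℂ)) / (k : ℂ) = ((-t : ℝ) : ℂ) := by
      rw [htdef]
      push_cast
      field_simp
      ring
    rw [heq] at hmean
    exact absurd (g_nonneg_neg_real hx hw ht) (not_le.2 hmean)

/-! ### Laguerre's theorem for the half-plane -/

lemma eval_derivative_multiset (s : Multiset ℂ) :
    ∀ x : ℂ, (∀ r ∈ s, x - r ≠ 0) →
      Polynomial.eval x (Polynomial.derivative ((s.map fun r => X - C r).prod)) =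
        Polynomial.eval x ((s.map fun r => X - C r).prod) * (s.map fun r => (x - r)⁻¹).sum := by
  induction s using Multiset.induction with
  | empty => intro x _; simp
  | cons r t ih =>
    intro x hx
    have h1 : x - r ≠ 0 := hx r (Multiset.mem_cons_self _ _)
    have ih' := ih x fun q hq => hx q (Multiset.mem_cons_of_mem hq)
    simp only [Multiset.map_cons, Multiset.prod_cons, Multiset.sum_cons, derivative_mul,
      eval_add, eval_mul, ih', derivative_sub, derivative_X, derivative_C, sub_zero, eval_one,
      eval_sub, eval_X, eval_C]
    field_simp

/-- **Laguerre's theorem** for the closed half-plane `re ≥ -ε`: if `P` of degree at most `m`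
has no zeros there, then neither does `m•P + (w - X)•P'` for any `w` in the half-plane. -/
lemma laguerre (m : ℕ) (hm : 1 ≤ m) (a : ℕ → ℂ) {ε : ℝ} (hε : 0 < ε)
    (hstab : ∀ z : ℂ, -ε ≤ z.re → ∑ i ∈ Finset.range (m + 1), a i * z ^ i ≠ 0)
    {x w : ℂ} (hx : -ε ≤ x.re) (hw : -ε ≤ w.re) :
    ∑ k ∈ Finset.range m, (((m : ℂ) - k) * a k + w * (k + 1) * a (k + 1)) * x ^ k ≠ 0 := by
  classical
  set p : ℂ[X] := ∑ i ∈ Finset.range (m + 1), Polynomial.C (a i) * X ^ i with hp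
  have hpeval : ∀ z : ℂ, p.eval z = ∑ i ∈ Finset.range (m + 1), a i * z ^ i := by
    intro z; rw [hp]; simp [eval_finset_sum]
  have hp0 : ∀ z : ℂ, -ε ≤ z.re → p.eval z ≠ 0 := fun z hz => (hpeval z) ▸ hstab z hz
  have hpne : p ≠ 0 := by
    intro h
    apply hp0 0 (by simpa using hε.le)
    rw [h]; simp
  have hdeg : p.natDegree ≤ m := by
    apply Polynomial.natDegree_sum_le_of_forall_le
    intro i hi
    apply le_trans (Polynomial.natDegree_C_mul_le _ _)
    simpa [Polynomial.natDegree_X_pow] using Nat.lt_succ_iff.1 (Finset.mem_range.1 hi)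
  have hder : ∀ z : ℂ, (Polynomial.derivative p).eval z
      = ∑ k ∈ Finset.range m, ((k : ℂ) + 1) * a (k + 1) * z ^ k := by
    intro z
    rw [hp, derivative_sum]
    rw [Polynomial.eval_finset_sum]
    rw [Finset.sum_range_succ']
    simp only [Polynomial.derivative_C_mul_X_pow]
    simp only [eval_mul, eval_C, eval_pow, eval_X]
    simp only [Nat.cast_zero, mul_zero, zero_mul, add_zero, Nat.add_sub_cancel]
    apply Finset.sum_congr rfl
    intro k _
    push_cast
    ring
  have e1 : x * ∑ k ∈ Finset.range m, ((k : ℂ) + 1) * a (k + 1) * x ^ k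
      = ∑ i ∈ Finset.range (m + 1), (i : ℂ) * a i * x ^ i := by
    rw [Finset.sum_range_succ', Finset.mul_sum]
    simp only [Nat.cast_zero, zero_mul, add_zero]
    apply Finset.sum_congr rfl
    intro k _
    push_cast
    ring
  have e2 : ∑ k ∈ Finset.range m, (((m : ℂ) - k) * a k) * x ^ k
      = ∑ i ∈ Finset.range (m + 1), (((m : ℂ) - i) * a i) * x ^ i := by
    rw [Finset.sum_range_succ]
    simp
  have e3 : ∑ i ∈ Finset.range (m + 1), (((m : ℂ) - i) * a i) * x ^ i
      = (m : ℂ) * (∑ i ∈ Finset.range (m + 1), a i * x ^ i)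
        - ∑ i ∈ Finset.range (m + 1), (i : ℂ) * a i * x ^ i := by
    rw [Finset.mul_sum, ← Finset.sum_sub_distrib]
    apply Finset.sum_congr rfl
    intro i _
    ring
  have hT : ∑ k ∈ Finset.range m, (((m : ℂ) - k) * a k + w * (k + 1) * a (k + 1)) * x ^ k
      = (m : ℂ) * p.eval x + (w - x) * (Polynomial.derivative p).eval x := by
    rw [hder x, hpeval x]
    have step1 : ∑ k ∈ Finset.range m, (((m : ℂ) - k) * a k + w * (k + 1) * a (k + 1)) * x ^ k
        = ∑ k ∈ Finset.range m, (((m : ℂ) - k) * a k) * x ^ k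
          + w * ∑ k ∈ Finset.range m, ((k : ℂ) + 1) * a (k + 1) * x ^ k := by
      rw [Finset.mul_sum, ← Finset.sum_add_distrib]
      apply Finset.sum_congr rfl
      intro k _
      ring
    rw [step1]
    linear_combination e1 + e2 + e3
  rw [hT]
  set s : Multiset ℂ := p.roots with hsdef
  have hcard : Multiset.card s ≤ m := le_trans (Polynomial.card_roots' p) hdeg
  have hroots : ∀ r ∈ s, r.re < -ε := by
    intro r hr
    by_contra hcon
    exact hp0 r (not_lt.1 hcon) ((Polynomial.mem_roots hpne).1 hr)
  have hxr : ∀ r ∈ s, x - r ≠ 0 := by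
    intro r hr h
    rw [sub_eq_zero] at h
    subst h
    exact absurd hx (not_le.2 (hroots x hr))
  have hfac : p = Polynomial.C p.leadingCoeff * (s.map fun r => X - C r).prod :=
    (Polynomial.C_leadingCoeff_mul_prod_multiset_X_sub_C IsAlgClosed.card_roots_eq_natDegree).symm
  have hlc : p.leadingCoeff ≠ 0 := Polynomial.leadingCoeff_ne_zero.2 hpne
  set M : ℂ[X] := (s.map fun r => X - C r).prod with hM
  have hMeval : M.eval x = (s.map fun r => x - r).prod := by
    rw [hM, Polynomial.eval_multiset_prod, Multiset.map_map]
    congr 1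
    apply Multiset.map_congr rfl
    intro r _
    simp
  have hMne : M.eval x ≠ 0 := by
    rw [hMeval]
    apply Multiset.prod_ne_zero
    intro h
    obtain ⟨r, hr, hr0⟩ := Multiset.mem_map.1 h
    exact hxr r hr hr0
  have hderM := eval_derivative_multiset s x hxr
  have hpevalx : p.eval x = p.leadingCoeff * M.eval x := by
    conv_lhs => rw [hfac]
    simp [hM]
  have hpderx : (Polynomial.derivative p).eval x
      = p.leadingCoeff * (M.eval x * (s.map fun r => (x - r)⁻¹).sum) := by
    conv_lhs => rw [hfac]
    rw [Polynomial.derivative_C_mul, eval_mul, eval_C, hderM]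
  rw [hpevalx, hpderx]
  have hbr : (m : ℂ) + (w - x) * (s.map fun r => (x - r)⁻¹).sum
      = ((m : ℂ) - (Multiset.card s : ℂ)) + (s.map fun r => (w - r) / (x - r)).sum := by
    have h1 : (s.map fun r => (w - r) / (x - r))
        = s.map fun r => (w - x) * (x - r)⁻¹ + 1 := by
      apply Multiset.map_congr rfl
      intro r hr
      have hne := hxr r hr
      field_simp
      ring
    rw [h1]
    rw [Multiset.sum_map_add]
    rw [Multiset.sum_map_mul_left]
    simp only [Multiset.map_const', Multiset.sum_replicate, smul_eq_mul, mul_one]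
    ring
  have hkey := key m hm hε hx hw s hcard hroots
  rw [← hbr] at hkey
  intro hcon
  apply hkey
  have : p.leadingCoeff * M.eval x
      * ((m : ℂ) + (w - x) * (s.map fun r => (x - r)⁻¹).sum) = 0 := by
    linear_combination hcon
  rcases mul_eq_zero.1 this with h | h
  · exact absurd h (mul_ne_zero hlc hMne)
  · exact h

/-! ### Combinatorics of the polar form -/

lemma powerset_map {α β : Type*} (f : α ↪ β) (s : Finset α) :
    (s.map f).powerset = s.powerset.map ⟨Finset.map f, Finset.map_injective f⟩ := by
  ext u
  simp only [Finset.mem_powerset, Finset.mem_map, Function.Embedding.coeFn_mk]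
  constructor
  · intro hu
    obtain ⟨t, ht, rfl⟩ := Finset.subset_map_iff.1 hu
    exact ⟨t, ht, rfl⟩
  · rintro ⟨t, ht, rfl⟩
    exact Finset.map_subset_map.2 ht

lemma sum_powerset_map {α β M : Type*} [AddCommMonoid M] (f : α ↪ β) (s : Finset α)
    (F : Finset β → M) :
    ∑ t ∈ (s.map f).powerset, F t = ∑ t ∈ s.powerset, F (t.map f) := by
  rw [powerset_map, Finset.sum_map]
  rfl

/-- The polar form evaluated on the constant tuple recovers the polynomial. -/
lemma diag (d : ℕ) (a : ℕ → ℂ) (x : ℂ) :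
    ∑ I : Finset (Fin d), (a I.card / (d.choose I.card : ℂ)) * ∏ _i ∈ I, x
      = ∑ k ∈ Finset.range (d + 1), a k * x ^ k := by
  have h1 : ∀ I : Finset (Fin d), (a I.card / (d.choose I.card : ℂ)) * ∏ _i ∈ I, x
      = a I.card / (d.choose I.card : ℂ) * x ^ I.card := by
    intro I
    rw [Finset.prod_const]
  simp_rw [h1]
  rw [← Finset.powerset_univ]
  rw [Finset.sum_powerset_apply_card (f := fun k => a k / (d.choose k : ℂ) * x ^ k)]
  rw [Finset.card_univ, Fintype.card_fin]
  apply Finset.sum_congr rfl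
  intro k hk
  have hk' : k ≤ d := Nat.lt_succ_iff.1 (Finset.mem_range.1 hk)
  have h : (d.choose k : ℂ) ≠ 0 := by
    exact_mod_cast (Nat.choose_pos hk').ne'
  rw [nsmul_eq_mul]
  field_simp

lemma coeff_id (d k : ℕ) (hk : k ≤ d) (ak ak1 w : ℂ) :
    ak / ((d+1).choose k : ℂ) + ak1 / ((d+1).choose (k+1) : ℂ) * w
      = ((ak * ((d:ℂ)+1-(k:ℂ)) + w * ak1 * ((k:ℂ)+1)) / ((d:ℂ)+1)) / (d.choose k : ℂ) := by
  have hA : (((d+1).choose k : ℕ) : ℂ) ≠ 0 := by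
    exact_mod_cast (Nat.choose_pos (by omega : k ≤ d + 1)).ne'
  have hB : (((d+1).choose (k+1) : ℕ) : ℂ) ≠ 0 := by
    exact_mod_cast (Nat.choose_pos (by omega : k + 1 ≤ d + 1)).ne'
  have hc : ((d.choose k : ℕ) : ℂ) ≠ 0 := by
    exact_mod_cast (Nat.choose_pos hk).ne'
  have hD : ((d : ℂ) + 1) ≠ 0 := by
    have : ((d : ℂ) + 1) = ((d + 1 : ℕ) : ℂ) := by push_cast; ring
    rw [this]
    exact_mod_cast Nat.succ_ne_zero d
  have h1 : ((d.choose k : ℕ) : ℂ) * ((d : ℂ) + 1)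
      = (((d+1).choose k : ℕ) : ℂ) * ((d : ℂ) + 1 - (k : ℂ)) := by
    have := Nat.choose_mul_succ_eq d k
    have hcast : (((d.choose k) * (d + 1) : ℕ) : ℂ) = (((d+1).choose k * (d + 1 - k) : ℕ) : ℂ) := by
      exact_mod_cast this
    push_cast [Nat.cast_sub (by omega : k ≤ d + 1)] at hcast
    linear_combination hcast
  have h2 : ((d : ℂ) + 1) * ((d.choose k : ℕ) : ℂ)
      = (((d+1).choose (k+1) : ℕ) : ℂ) * ((k : ℂ) + 1) := by
    have h := Nat.add_one_mul_choose_eq d k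
    have hcast : (((d + 1) * d.choose k : ℕ) : ℂ)
        = (((d+1).choose (k+1) * (k+1) : ℕ) : ℂ) := by exact_mod_cast h
    push_cast at hcast
    linear_combination hcast
  field_simp
  linear_combination (ak * (((d+1).choose (k+1) : ℕ) : ℂ)) * h1
    + (w * ak1 * (((d+1).choose k : ℕ) : ℂ)) * h2

/-- Splitting the polar form in `d + 1` variables according to the last variable. -/
lemma polar_split (d : ℕ) (a : ℕ → ℂ) (z : Fin (d + 1) → ℂ) :
    ∑ I : Finset (Fin (d + 1)), (a I.card / ((d+1).choose I.card : ℂ)) * ∏ i ∈ I, z i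
      = ∑ J : Finset (Fin d),
          (((a J.card * ((d:ℂ)+1-(J.card:ℂ))
              + z (Fin.last d) * a (J.card+1) * ((J.card:ℂ)+1)) / ((d:ℂ)+1))
            / (d.choose J.card : ℂ)) * ∏ i ∈ J, z i.castSucc := by
  have hlast : Fin.last d ∉ (Finset.univ : Finset (Fin d)).map Fin.castSuccEmb := by
    simp only [Finset.mem_map, Finset.mem_univ, true_and, not_exists]
    intro i
    exact fun h => (Fin.castSucc_lt_last i).ne h
  rw [← Finset.powerset_univ, Fin.univ_castSuccEmb, Finset.cons_eq_insert,
    Finset.sum_powerset_insert hlast, sum_powerset_map, sum_powerset_map,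
    ← Finset.sum_add_distrib, Finset.powerset_univ]
  apply Finset.sum_congr rfl
  intro J _
  have hJlast : Fin.last d ∉ J.map Fin.castSuccEmb := by
    simp only [Finset.mem_map, not_exists]
    intro i
    exact fun h => (Fin.castSucc_lt_last i).ne h.2
  have hcard : (J.map Fin.castSuccEmb).card = J.card := Finset.card_map _
  have hprod : ∏ i ∈ J.map Fin.castSuccEmb, z i = ∏ i ∈ J, z i.castSucc := by
    rw [Finset.prod_map]
    rfl
  rw [Finset.card_insert_of_notMem hJlast, Finset.prod_insert hJlast, hcard, hprod]
  have hk : J.card ≤ d := by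
    have := Finset.card_le_univ J
    simpa using this
  rw [← coeff_id d J.card hk (a J.card) (a (J.card + 1)) (z (Fin.last d))]
  ring

/-! ### The forward (hard) direction, by induction on the number of variables -/

lemma fwd {ε : ℝ} (hε : 0 < ε) :
    ∀ d : ℕ, 1 ≤ d → ∀ a : ℕ → ℂ,
      (∀ z : ℂ, -ε ≤ z.re → ∑ i ∈ Finset.range (d + 1), a i * z ^ i ≠ 0) →
      ∀ z : Fin d → ℂ, (∀ i, -ε ≤ (z i).re) →
        ∑ I : Finset (Fin d), (a I.card / (d.choose I.card : ℂ)) * ∏ i ∈ I, z i ≠ 0 := by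
  intro d hd
  induction d, hd using Nat.le_induction with
  | base =>
    intro a hstab z hz
    have huniv : (Finset.univ : Finset (Finset (Fin 1))) = {∅, {0}} := by decide
    rw [huniv, Finset.sum_insert (by decide), Finset.sum_singleton]
    have hP := hstab (z 0) (hz 0)
    simp only [Finset.sum_range_succ, Finset.sum_range_zero, zero_add, pow_zero, pow_one,
      mul_one] at hP
    simpa using hP
  | succ d hd ih =>
    intro a hstab z hz
    set b : ℕ → ℂ := fun k =>
      (a k * ((d:ℂ)+1-(k:ℂ)) + z (Fin.last d) * a (k+1) * ((k:ℂ)+1)) / ((d:ℂ)+1) with hb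
    have hD : ((d : ℂ) + 1) ≠ 0 := by
      have : ((d : ℂ) + 1) = ((d + 1 : ℕ) : ℂ) := by push_cast; ring
      rw [this]
      exact_mod_cast Nat.succ_ne_zero d
    have hbstab : ∀ x : ℂ, -ε ≤ x.re → ∑ i ∈ Finset.range (d + 1), b i * x ^ i ≠ 0 := by
      intro x hx h0
      have hlag := laguerre (d + 1) (by omega) a hε hstab hx (hz (Fin.last d))
      apply hlag
      have hEq : ∑ k ∈ Finset.range (d + 1),
            ((((d + 1 : ℕ) : ℂ) - k) * a k + z (Fin.last d) * (k + 1) * a (k + 1)) * x ^ k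
          = ((d : ℂ) + 1) * ∑ i ∈ Finset.range (d + 1), b i * x ^ i := by
        rw [Finset.mul_sum]
        apply Finset.sum_congr rfl
        intro k _
        rw [hb]
        push_cast
        have hcan := div_mul_cancel₀
          (a k * ((d:ℂ)+1-(k:ℂ)) + z (Fin.last d) * a (k+1) * ((k:ℂ)+1)) hD
        linear_combination (-(x ^ k)) * hcan
      rw [hEq, h0, mul_zero]
    have hIH := ih b hbstab (fun i => z i.castSucc) (fun i => hz _)
    intro h0
    apply hIH
    have hps := polar_split d a z
    rw [h0] at hps
    have hconv : ∑ J : Finset (Fin d), (b J.card / (d.choose J.card : ℂ))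
          * ∏ i ∈ J, z i.castSucc
        = ∑ J : Finset (Fin d),
            (((a J.card * ((d:ℂ)+1-(J.card:ℂ))
                + z (Fin.last d) * a (J.card+1) * ((J.card:ℂ)+1)) / ((d:ℂ)+1))
              / (d.choose J.card : ℂ)) * ∏ i ∈ J, z i.castSucc := by
      apply Finset.sum_congr rfl
      intro J _
      rw [hb]
    rw [hconv, ← hps]

end GWSAux

/-- **Grace–Szegő–Walsh for the half-plane `H_ε`.** A univariate polynomial of degree at most `d`
is `H_ε`-stable iff its `d`-th polar form is `H_ε`-stable. -/
theorem grace_walsh_szego_halfplane (d : ℕ) (hd : 1 ≤ d) (a : ℕ → ℂ) (ε : ℝ) (hε : 0 < ε) :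
    (∀ z : ℂ, -ε ≤ z.re → ∑ i ∈ Finset.range (d + 1), a i * z ^ i ≠ 0) ↔
      (∀ z : Fin d → ℂ, (∀ i, -ε ≤ (z i).re) →
        ∑ I : Finset (Fin d), (a I.card / (d.choose I.card : ℂ)) * ∏ i ∈ I, z i ≠ 0) := by
  constructor
  · intro h
    exact GWSAux.fwd hε d hd a h
  · intro h z hz
    have h2 := h (fun _ => z) (fun _ => hz)
    intro hc
    apply h2
    have hdiag := GWSAux.diag d a z
    calc ∑ I : Finset (Fin d), (a I.card / (d.choose I.card : ℂ)) * ∏ _i ∈ I, z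
        = ∑ k ∈ Finset.range (d + 1), a k * z ^ k := hdiag
      _ = 0 := hc
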